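/- For every y ∈ ℝ^P, every λ > 0 and every linear Φ : ℝ^N → ℝ^P with columns φ₁,…,φ_N, the Lasso problem min_x (1/(2λ))‖Φx − y‖² + ‖x‖₁ admits a minimizer x⋆ such that the family of columns (φ_i)_{i∈supp(x⋆)} is linearly independent. -/

import Mathlib

open Matrix

/-- Euclidean dot product on `ℝ^n`. -/
noncomputable def dotp {n : ℕ} (u v : Fin n → ℝ) : ℝ := ∑ i, u i * v i

/-- Euclidean (ℓ²) norm on `ℝ^n`. -/
noncomputable def nrm2 {n : ℕ} (u : Fin n → ℝ) : ℝ := Real.sqrt (∑ i, (u i) ^ 2)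

/-- ℓ¹ norm on `ℝ^n`. -/
noncomputable def l1norm {n : ℕ} (u : Fin n → ℝ) : ℝ := ∑ i, |u i|

/-- ℓ^∞ norm of a finitely indexed real vector. -/
noncomputable def linf {ι : Type*} [Fintype ι] (u : ι → ℝ) : ℝ := ⨆ i, |u i|

/-- The sign function: 1 for positive, -1 for negative, 0 at 0. -/
noncomputable def sgn (t : ℝ) : ℝ := if 0 < t then 1 else if t < 0 then -1 else 0

/-- Subdifferential of a finite-valued function `J : ℝ^n → ℝ` at `x`:
`∂J(x) = {η : J(x+δ) ≥ J(x) + ⟨η,δ⟩ for all δ}`. -/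
def subdiff {n : ℕ} (J : (Fin n → ℝ) → ℝ) (x : Fin n → ℝ) : Set (Fin n → ℝ) :=
  {η | ∀ δ, J x + dotp η δ ≤ J (x + δ)}

/-- The model tangent subspace `T_x = Lin(∂J(x))^⊥`, where `Lin(E)` is the linear
space parallel to the affine hull of `E`. -/
def modelT {n : ℕ} (J : (Fin n → ℝ) → ℝ) (x : Fin n → ℝ) : Set (Fin n → ℝ) :=
  {u | ∀ v ∈ (affineSpan ℝ (subdiff J x)).direction, dotp u v = 0}

lemma abs_add_of_mul_nonneg' {a b : ℝ} (h : 0 ≤ a * b) : |a + b| = |a| + |b| := by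
  rcases le_total 0 a with ha | ha <;> rcases le_total 0 b with hb | hb
  · rw [abs_of_nonneg ha, abs_of_nonneg hb, abs_of_nonneg (by linarith)]
  · have h0 : a * b = 0 := le_antisymm (by nlinarith) h
    rcases mul_eq_zero.1 h0 with h1 | h1 <;> simp [h1]
  · have h0 : a * b = 0 := le_antisymm (by nlinarith) h
    rcases mul_eq_zero.1 h0 with h1 | h1 <;> simp [h1]
  · rw [abs_of_nonpos ha, abs_of_nonpos hb, abs_of_nonpos (by linarith)]; ring

lemma nrm2_sq' {n : ℕ} (u : Fin n → ℝ) : nrm2 u ^ 2 = ∑ i, u i ^ 2 :=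
  Real.sq_sqrt (Finset.sum_nonneg fun i _ => sq_nonneg _)

/-- the Lasso always admits a minimizer whose active columns are
linearly independent. -/
theorem stmt19 {N P : ℕ} (Φ : Matrix (Fin P) (Fin N) ℝ) (y : Fin P → ℝ)
    (lam : ℝ) (hlam : 0 < lam) :
    ∃ xs : Fin N → ℝ,
      (∀ x, (1 / (2 * lam)) * nrm2 (Φ.mulVec xs - y) ^ 2 + l1norm xs ≤
            (1 / (2 * lam)) * nrm2 (Φ.mulVec x - y) ^ 2 + l1norm x) ∧
      LinearIndependent ℝ (fun i : {i // xs i ≠ 0} => Φᵀ (i : Fin N)) := by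
  classical
  set f : (Fin N → ℝ) → ℝ :=
    fun x => (1 / (2 * lam)) * nrm2 (Φ.mulVec x - y) ^ 2 + l1norm x with hf
  -- continuity
  have hc : Continuous f := by
    have hfe : f = fun x =>
        (1 / (2 * lam)) * (∑ j, ((∑ i, Φ j i * x i) - y j) ^ 2) + ∑ i, |x i| := by
      funext x
      simp only [hf, nrm2_sq', l1norm, Matrix.mulVec, dotProduct, Pi.sub_apply]
    rw [hfe]
    apply Continuous.add
    · apply continuous_const.mul
      apply continuous_finset_sum
      intro j _
      exact ((continuous_finset_sum _ fun i _ =>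
        (continuous_const.mul (continuous_apply i))).sub continuous_const).pow 2
    · exact continuous_finset_sum _ fun i _ => (continuous_apply i).abs
  -- coercivity
  have hcoer : Filter.Tendsto f (Filter.cocompact _) Filter.atTop := by
    apply Filter.tendsto_atTop_mono _ tendsto_norm_cocompact_atTop
    intro x
    have hl1 : 0 ≤ l1norm x := Finset.sum_nonneg fun i _ => abs_nonneg _
    have h1 : ‖x‖ ≤ l1norm x := by
      rw [pi_norm_le_iff_of_nonneg hl1]
      intro i
      rw [Real.norm_eq_abs]
      simp only [l1norm]
      exact Finset.single_le_sum (f := fun j => |x j|) (fun j _ => abs_nonneg _) (Finset.mem_univ i)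
    have h2 : 0 ≤ (1 / (2 * lam)) * nrm2 (Φ.mulVec x - y) ^ 2 := by positivity
    simp only [hf]; linarith
  obtain ⟨x0, hx0⟩ := hc.exists_forall_le hcoer
  -- minimal support cardinality
  set S : (Fin N → ℝ) → Finset (Fin N) := fun x => Finset.univ.filter (fun i => x i ≠ 0)
    with hS
  have hQ : ∃ n, ∃ x : Fin N → ℝ, (∀ z, f x ≤ f z) ∧ (S x).card = n :=
    ⟨(S x0).card, x0, hx0, rfl⟩
  obtain ⟨xs, hmin, hcard⟩ := Nat.find_spec hQ
  refine ⟨xs, fun x => hmin x, ?_⟩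
  by_contra hdep
  rw [Fintype.not_linearIndependent_iff] at hdep
  obtain ⟨g, hg, i1, hi1⟩ := hdep
  set v : Fin N → ℝ := fun i => if h : xs i = 0 then 0 else g ⟨i, h⟩ with hv
  have hv0 : ∀ i, xs i = 0 → v i = 0 := fun i h => by simp [hv, h]
  have hvx : ∀ i, v i ≠ 0 → xs i ≠ 0 := by
    intro i hvi h; exact hvi (hv0 i h)
  -- Φ v = 0
  have hΦv : ∀ j, ∑ i, Φ j i * v i = 0 := by
    intro j
    have h1 := congrFun hg j
    simp only [Finset.sum_apply, Pi.smul_apply, Pi.zero_apply, smul_eq_mul,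
      Matrix.transpose_apply] at h1
    have h2 : ∑ i, Φ j i * v i
        = ∑ i ∈ Finset.univ.filter (fun i => xs i ≠ 0), Φ j i * v i := by
      refine (Finset.sum_subset (Finset.subset_univ _) ?_).symm
      intro i _ hi
      simp only [Finset.mem_filter, Finset.mem_univ, true_and, not_not] at hi
      rw [hv0 i hi, mul_zero]
    have h3 : ∑ i ∈ Finset.univ.filter (fun i => xs i ≠ 0), Φ j i * v i
        = ∑ i : {i // xs i ≠ 0}, Φ j i.1 * v i.1 := by
      rw [← Finset.sum_subtype (Finset.univ.filter (fun i => xs i ≠ 0))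
        (fun i => by simp) (fun i => Φ j i * v i)]
    have h4 : ∀ i : {i // xs i ≠ 0}, Φ j i.1 * v i.1 = g i * Φ j i.1 := by
      intro i
      have : v i.1 = g i := by simp [hv, i.2]
      rw [this, mul_comm]
    rw [h2, h3, Finset.sum_congr rfl (fun i _ => h4 i), h1]
  -- pick the coordinate with minimal ratio
  have hi1v : v i1.1 ≠ 0 := by
    have : v i1.1 = g i1 := by simp [hv, i1.2]
    rw [this]; exact hi1
  obtain ⟨i0, hi0mem, hi0min⟩ := Finset.exists_min_image
    (Finset.univ.filter (fun i => v i ≠ 0)) (fun i => |xs i / v i|)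
    ⟨i1.1, by simp [hi1v]⟩
  simp only [Finset.mem_filter, Finset.mem_univ, true_and] at hi0mem
  have hxsi0 : xs i0 ≠ 0 := hvx i0 hi0mem
  set t : ℝ := -xs i0 / v i0 with ht
  have hbound : ∀ i, (t * v i) ^ 2 ≤ xs i ^ 2 := by
    intro i
    by_cases hvi : v i = 0
    · rw [hvi, mul_zero]; simpa using sq_nonneg (xs i)
    · have h := hi0min i (by simp [hvi])
      have hvi0' : (0:ℝ) < |v i0| := abs_pos.2 hi0mem
      have hvi' : (0:ℝ) < |v i| := abs_pos.2 hvi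
      rw [abs_div, abs_div] at h
      have habs : |t| = |xs i0| / |v i0| := by
        rw [ht, abs_div, abs_neg]
      have h2 : |t| * |v i| ≤ |xs i| := by
        rw [habs]
        calc |xs i0| / |v i0| * |v i| ≤ |xs i| / |v i| * |v i| := by
              exact mul_le_mul_of_nonneg_right h (le_of_lt hvi')
          _ = |xs i| := div_mul_cancel₀ _ (ne_of_gt hvi')
      have h3 : |t * v i| ≤ |xs i| := by rw [abs_mul]; exact h2
      have h4 := pow_le_pow_left₀ (abs_nonneg _) h3 2
      rwa [sq_abs, sq_abs] at h4
  set x' : Fin N → ℝ := fun i => xs i + t * v i with hx'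
  set x'' : Fin N → ℝ := fun i => xs i - t * v i with hx''
  -- the ℓ¹ identity
  have hl1 : l1norm x' + l1norm x'' = 2 * l1norm xs := by
    simp only [l1norm, ← Finset.sum_add_distrib, Finset.mul_sum]
    refine Finset.sum_congr rfl fun i _ => ?_
    have hab : 0 ≤ (xs i + t * v i) * (xs i - t * v i) := by nlinarith [hbound i]
    calc |x' i| + |x'' i| = |(xs i + t * v i) + (xs i - t * v i)| :=
          (abs_add_of_mul_nonneg' hab).symm
      _ = |2 * xs i| := by ring_nf
      _ = 2 * |xs i| := by rw [abs_mul]; norm_num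
  -- mulVec unchanged
  have hmv : ∀ (s : ℝ), Φ.mulVec (fun i => xs i + s * v i) = Φ.mulVec xs := by
    intro s
    funext j
    simp only [Matrix.mulVec, dotProduct]
    calc ∑ i, Φ j i * (xs i + s * v i)
        = ∑ i, (Φ j i * xs i + s * (Φ j i * v i)) := by
          refine Finset.sum_congr rfl fun i _ => by ring
      _ = ∑ i, Φ j i * xs i + s * ∑ i, Φ j i * v i := by
          rw [Finset.sum_add_distrib, Finset.mul_sum]
      _ = ∑ i, Φ j i * xs i := by rw [hΦv j, mul_zero, add_zero]
  have hmv' : Φ.mulVec x' = Φ.mulVec xs := hmv t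
  have hmv'' : Φ.mulVec x'' = Φ.mulVec xs := by
    have := hmv (-t)
    convert this using 2
    funext i; ring
  -- x' is also a minimizer
  have hsum : f x' + f x'' = 2 * f xs := by
    simp only [hf, hmv', hmv'']
    linarith [hl1]
  have hx'min : ∀ z, f x' ≤ f z := by
    have h1 := hmin x'
    have h2 := hmin x''
    have hfeq : f x' = f xs := by linarith
    intro z; rw [hfeq]; exact hmin z
  -- support strictly shrinks
  have hsub : S x' ⊆ S xs := by
    intro i hi
    simp only [hS, Finset.mem_filter, Finset.mem_univ, true_and] at hi ⊢
    intro h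
    exact hi (by simp [hx', h, hv0 i h])
  have hx'i0 : x' i0 = 0 := by
    simp only [hx', ht]
    field_simp
    ring
  have hi0notin : i0 ∉ S x' := by
    simp [hS, hx'i0]
  have hi0in : i0 ∈ S xs := by simp [hS, hxsi0]
  have hlt : (S x').card < (S xs).card :=
    Finset.card_lt_card ((Finset.ssubset_iff_of_subset hsub).2 ⟨i0, hi0in, hi0notin⟩)
  rw [hcard] at hlt
  exact Nat.find_min hQ hlt ⟨x', hx'min, rfl⟩
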